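/- Let u be a finite word over the two-letter alphabet {a, b} and let k ≥ 2. Then the word u² (the concatenation of two copies of u) is balanced if and only if the word u^k (the concatenation of k copies of u) is balanced. -/
import Mathlib


/-- `k`-th power of a finite word: the concatenation of `k` copies of `u`. -/
def listPow {A : Type*} (u : List A) : ℕ → List A
  | 0 => []
  | n + 1 => u ++ listPow u n

/-- A finite word is balanced if any two of its factors of equal length contain
almost the same number of occurrences of each letter. -/
def BalancedFin {A : Type*} [DecidableEq A] (w : List A) : Prop :=
  ∀ u v : List A, u <:+: w → v <:+: w → u.length = v.length →
    ∀ a : A, |(u.count a : ℤ) - (v.count a : ℤ)| ≤ 1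

namespace Stmt13Aux

variable {A : Type*} [DecidableEq A]

lemma lp_add (u : List A) (m n : ℕ) :
    listPow u (m + n) = listPow u m ++ listPow u n := by
  induction m with
  | zero => simp [listPow]
  | succ m ih => simp [listPow, Nat.succ_add, ih]

lemma lp_nil (m : ℕ) : listPow ([] : List A) m = [] := by
  induction m with
  | zero => rfl
  | succ m ih => simp [listPow, ih]

lemma lp_len (u : List A) (m : ℕ) : (listPow u m).length = m * u.length := by
  induction m with
  | zero => simp [listPow]
  | succ m ih => simp [listPow, ih, Nat.succ_mul]; ring

lemma lp_prefix (u : List A) {m M : ℕ} (h : m ≤ M) :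
    listPow u m <+: listPow u M :=
  ⟨listPow u (M - m), by rw [← lp_add]; congr 1; omega⟩

lemma drop_mul_lp (u : List A) (q M : ℕ) :
    (listPow u M).drop (u.length * q) = listPow u (M - q) := by
  induction q generalizing M with
  | zero => simp
  | succ q ih =>
    cases M with
    | zero => simp [listPow]
    | succ M =>
      rw [show u.length * (q + 1) = u.length * q + u.length by ring,
        Nat.add_comm, ← List.drop_drop]
      have : (listPow u (M + 1)).drop u.length = listPow u M := by
        simp [listPow]
      rw [this, ih]
      congr 1
      omega

lemma take_drop_count (u : List A) {M s : ℕ} (hM : 2 ≤ M) (hs : s ≤ u.length) (a : A) :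
    (((listPow u M).drop s).take u.length).count a = u.count a := by
  obtain ⟨M, rfl⟩ : ∃ m, M = m + 2 := ⟨M - 2, by omega⟩
  have h1 : listPow u (M + 2) = u ++ (u ++ listPow u M) := by
    rw [show M + 2 = 2 + M by omega, lp_add]
    simp [listPow]
  rw [h1, List.drop_append, Nat.sub_eq_zero_of_le hs, List.drop_zero,
    List.take_append]
  have hlen : (u.drop s).length = u.length - s := by simp
  rw [List.take_of_length_le (by omega), hlen,
    show u.length - (u.length - s) = s by omega,
    List.take_append_of_le_length (by omega)]
  rw [List.count_append]
  conv_rhs => rw [← List.take_append_drop s u, List.count_append]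
  omega

lemma seg_count (u : List A) {M j : ℕ} (hn : u ≠ [])
    (h : j + u.length ≤ M * u.length) (a : A) :
    (((listPow u M).drop j).take u.length).count a = u.count a := by
  have hn0 : 0 < u.length := List.length_pos_iff.mpr hn
  set n := u.length with hnn
  set q := j / n with hq
  set s := j % n with hs
  have hj : j = n * q + s := by rw [hs, hq, Nat.div_add_mod]
  have hsn : s < n := Nat.mod_lt _ hn0
  rw [hj, ← List.drop_drop, drop_mul_lp]
  have hqM : q + 1 ≤ M := by
    by_contra hc
    push_neg at hc
    have : M ≤ q := by omega
    have : M * n ≤ q * n := Nat.mul_le_mul_right _ this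
    have : j ≥ q * n := by rw [hj]; nlinarith
    omega
  rcases Nat.lt_or_ge (q + 1) M with h2 | h2
  · exact take_drop_count u (by omega) (by omega) a
  · -- M = q + 1, force s = 0
    have hM : M = q + 1 := by omega
    have hs0 : s = 0 := by
      have h1 : j + n ≤ M * n := h
      rw [hM, hj] at h1
      nlinarith
    rw [hs0, List.drop_zero, hM, show q + 1 - q = 1 by omega]
    simp only [listPow, List.append_nil]
    rw [show n = u.length from hnn, List.take_length]

lemma window_add (u : List A) (hn : u ≠ []) {M i L : ℕ}
    (h : i + L + u.length ≤ M * u.length) (a : A) :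
    (((listPow u M).drop i).take (L + u.length)).count a
      = (((listPow u M).drop i).take L).count a + u.count a := by
  rw [List.take_add, List.count_append, List.drop_drop,
    seg_count u hn (by linarith) a]

lemma window_reduce (u : List A) (hn : u ≠ []) {M i L : ℕ} (q : ℕ)
    (h : i + (L + u.length * q) ≤ M * u.length) (a : A) :
    (((listPow u M).drop i).take (L + u.length * q)).count a
      = (((listPow u M).drop i).take L).count a + q * u.count a := by
  induction q with
  | zero => simp
  | succ q ih =>
    have hms : u.length * (q + 1) = u.length * q + u.length := by ring
    rw [hms] at h ⊢
    rw [← Nat.add_assoc]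
    rw [window_add u hn (by linarith) a, ih (by linarith)]
    ring

lemma take_drop_prefix_eq {l l' : List A} (h : l <+: l') {s r : ℕ}
    (hr : s + r ≤ l.length) :
    (l.drop s).take r = (l'.drop s).take r := by
  obtain ⟨t, rfl⟩ := h
  rw [List.drop_append, Nat.sub_eq_zero_of_le (by omega), List.drop_zero,
    List.take_append_of_le_length (by simp; omega)]

/-- The key window decomposition lemma: the count of a window of `listPow u k`
equals the count of a small window of `listPow u 2` plus full periods. -/
lemma window_count (u : List A) (hn : u ≠ []) {k i L : ℕ} (hk : 2 ≤ k)
    (h : i + L ≤ k * u.length) (a : A) :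
    ∃ b : List A, b <:+: listPow u 2 ∧ b.length = L % u.length ∧
      (((listPow u k).drop i).take L).count a
        = b.count a + (L / u.length) * u.count a := by
  have hn0 : 0 < u.length := List.length_pos_iff.mpr hn
  have hL : u.length * (L / u.length) + L % u.length = L := Nat.div_add_mod L u.length
  have hrn : L % u.length < u.length := Nat.mod_lt _ hn0
  have hi : u.length * (i / u.length) + i % u.length = i := Nat.div_add_mod i u.length
  have hsn : i % u.length < u.length := Nat.mod_lt _ hn0
  have hc1 : u.length * (i / u.length) = (i / u.length) * u.length :=
    Nat.mul_comm _ _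
  have hc2 : u.length * (L / u.length) = (L / u.length) * u.length :=
    Nat.mul_comm _ _
  refine ⟨((listPow u 2).drop (i % u.length)).take (L % u.length), ?_, ?_, ?_⟩
  · exact ((List.take_prefix _ _).isInfix).trans ((List.drop_suffix _ _).isInfix)
  · rw [List.length_take, List.length_drop, lp_len]
    omega
  · conv_lhs => rw [show L = L % u.length + u.length * (L / u.length) by omega]
    rw [window_reduce u hn (L / u.length) (by omega) a]
    congr 1
    have e1 : (listPow u k).drop i = (listPow u (k - i / u.length)).drop (i % u.length) := by
      conv_lhs => rw [show i = u.length * (i / u.length) + (i % u.length) by omega]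
      rw [← List.drop_drop, drop_mul_lp]
    rw [e1]
    have hpk : i / u.length ≤ k := by
      have h1 : u.length * (i / u.length) ≤ u.length * k := by
        rw [show u.length * k = k * u.length from Nat.mul_comm _ _]
        omega
      exact Nat.le_of_mul_le_mul_left h1 hn0
    have hsub : (k - i / u.length) * u.length + (i / u.length) * u.length
        = k * u.length := by
      rw [← Nat.add_mul, Nat.sub_add_cancel hpk]
    have hsr2 : i % u.length + L % u.length ≤ (k - i / u.length) * u.length := by
      omega
    have e2 : ((listPow u (k - i / u.length)).drop (i % u.length)).take (L % u.length)
        = ((listPow u (k - i / u.length + 2)).drop (i % u.length)).take (L % u.length) :=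
      take_drop_prefix_eq (lp_prefix u (by omega)) (by rw [lp_len]; omega)
    have e3 : ((listPow u 2).drop (i % u.length)).take (L % u.length)
        = ((listPow u (k - i / u.length + 2)).drop (i % u.length)).take (L % u.length) :=
      take_drop_prefix_eq (lp_prefix u (by omega)) (by rw [lp_len]; omega)
    rw [e2, e3]

/-- Represent a factor as drop/take. -/
lemma infix_window {v w : List A} (h : v <:+: w) :
    ∃ i, i + v.length ≤ w.length ∧ v = (w.drop i).take v.length := by
  obtain ⟨s, t, e⟩ := h
  refine ⟨s.length, ?_, ?_⟩
  · rw [← e]; simp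
  · rw [← e, List.append_assoc, List.drop_left, List.take_left' rfl]

end Stmt13Aux

open Stmt13Aux in
/-- For a finite word `u` over the two-letter alphabet `Bool` and `k ≥ 2`,
`u²` is balanced iff `uᵏ` is balanced. -/
theorem stmt13 (u : List Bool) (k : ℕ) (hk : 2 ≤ k) :
    BalancedFin (listPow u 2) ↔ BalancedFin (listPow u k) := by
  rcases eq_or_ne u [] with rfl | hn
  · rw [lp_nil, lp_nil]
  constructor
  · -- hard direction
    intro h2 v w hv hw hlen a
    obtain ⟨i, hi, hvi⟩ := infix_window hv
    obtain ⟨j, hj, hwj⟩ := infix_window hw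
    rw [lp_len] at hi hj
    obtain ⟨b1, hb1, hb1l, hb1c⟩ := window_count u hn hk hi a
    obtain ⟨b2, hb2, hb2l, hb2c⟩ := window_count u hn hk (hlen ▸ hj) a
    rw [← hvi] at hb1c
    rw [hlen] at hb2c
    rw [← hwj] at hb2c
    rw [← hlen] at hb2c
    have hbal := h2 b1 b2 hb1 hb2 (by rw [hb1l, hb2l, hlen]) a
    have : (v.count a : ℤ) - (w.count a : ℤ)
        = (b1.count a : ℤ) - (b2.count a : ℤ) := by
      rw [hb1c, hb2c]; push_cast; ring
    rw [this]
    exact hbal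
  · -- easy direction
    intro h v w hv hw hlen a
    exact h v w (hv.trans (lp_prefix u hk).isInfix)
      (hw.trans (lp_prefix u hk).isInfix) hlen a
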